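/- arXiv:1403.4167 — 5 statements merged into one kernel-verified Lean document; each statement's English description precedes it below -/
import Mathlib

section
/- Let S ⊆ ℕ be a numerical semigroup with conductor β and Frobenius number γ = β − 1, let α := min(S \ {0}), and let K° := { a ∈ ℤ : 0 ≤ a < β and γ − a ∉ S }. Assume S is not symmetric (i.e., K° ⊄ S) and α < β. Then every integer a with β ≤ a < 2β − α can be written as a sum a = k₁ + k₂ with k₁, k₂ ∈ K°. -/
/-- Every integer in `[β, 2β - α)` is a sum of two elements of `K°`,
for a non-symmetric numerical semigroup `S` with conductor `β` and
multiplicity `α = min (S \ {0}) < β`. -/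
theorem stmt2 (S : Set ℤ)
    (hnneg : ∀ a ∈ S, 0 ≤ a)
    (h0 : (0 : ℤ) ∈ S)
    (hadd : ∀ a ∈ S, ∀ b ∈ S, a + b ∈ S)
    (β : ℤ)
    (hβ : (∀ n : ℤ, β ≤ n → n ∈ S) ∧ ∀ b : ℤ, (∀ n : ℤ, b ≤ n → n ∈ S) → β ≤ b)
    (α : ℤ) (hα : α ∈ S ∧ α ≠ 0 ∧ ∀ x ∈ S, x ≠ 0 → α ≤ x)
    (Kc : Set ℤ) (hKc : Kc = {a : ℤ | 0 ≤ a ∧ a < β ∧ β - 1 - a ∉ S})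
    (hnotsym : ¬ Kc ⊆ S)
    (hαβ : α < β) :
    ∀ a : ℤ, β ≤ a → a < 2 * β - α → ∃ k₁ ∈ Kc, ∃ k₂ ∈ Kc, a = k₁ + k₂ := by
  obtain ⟨hαS, hα0, hαmin⟩ := hα
  have hα1 : 1 ≤ α := by
    have := hnneg α hαS; omega
  set γ := β - 1 with hγdef
  have hγ0 : 0 ≤ γ := by omega
  have hγS : γ ∉ S := by
    intro h
    have h2 : ∀ n : ℤ, γ ≤ n → n ∈ S := by
      intro n hn
      rcases eq_or_lt_of_le hn with h' | h'
      · exact h' ▸ h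
      · exact hβ.1 n (by omega)
    have := hβ.2 γ h2
    omega
  have hmul : ∀ x ∈ S, ∀ k : ℕ, (k : ℤ) * x ∈ S := by
    intro x hx k
    induction k with
    | zero => simpa using h0
    | succ n ih =>
      have he : ((n : ℤ) + 1) * x = (n : ℤ) * x + x := by ring
      push_cast
      rw [he]
      exact hadd _ ih _ hx
  have hdvd : ∀ n : ℤ, 0 ≤ n → α ∣ n → n ∈ S := by
    rintro n hn ⟨k, hk⟩
    have hk0 : 0 ≤ k := by nlinarith
    have h1 := hmul α hαS k.toNat
    rw [Int.toNat_of_nonneg hk0] at h1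
    have h2 : n = k * α := by rw [hk]; ring
    rw [h2]; exact h1
  have hsmall : ∀ n : ℤ, 0 < n → n < α → n ∉ S := by
    intro n h1 h2 hn
    have := hαmin n hn (by omega)
    omega
  obtain ⟨c₀, hc₀K, hc₀S⟩ := Set.not_subset.mp hnotsym
  rw [hKc] at hc₀K
  simp only [Set.mem_setOf_eq] at hc₀K
  obtain ⟨hc₀0, hc₀β, hc₀γ⟩ := hc₀K
  have hα3 : 3 ≤ α := by
    by_contra h
    push_neg at h
    rcases (by omega : α = 1 ∨ α = 2) with h1 | h2
    · exact hγS (hdvd γ hγ0 (by rw [h1]; exact one_dvd γ))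
    · have hc1 : ¬ (2:ℤ) ∣ c₀ := fun hd => hc₀S (hdvd c₀ hc₀0 (by rw [h2]; exact hd))
      have hc2 : ¬ (2:ℤ) ∣ (γ - c₀) := fun hd => hc₀γ (hdvd _ (by omega) (by rw [h2]; exact hd))
      exact hγS (hdvd γ hγ0 (by rw [h2]; omega))
  have key : ∀ s : ℤ, α - 1 ≤ s → s ≤ γ - 1 →
      ∃ x y : ℤ, 0 ≤ x ∧ 0 ≤ y ∧ x ∉ S ∧ y ∉ S ∧ x + y = s := by
    intro s hs1 hs2
    by_cases hcase : s ≤ 2 * α - 2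
    · exact ⟨s - s / 2, s / 2, by omega, by omega,
        hsmall _ (by omega) (by omega), hsmall _ (by omega) (by omega), by omega⟩
    · push_neg at hcase
      by_cases hgap : ∀ g : ℤ, s - α + 1 ≤ g → g ≤ s - 1 → g ∈ S
      · -- no gap in the interval: rigid structure modulo α
        have hi : ∀ n : ℤ, s - α + 1 ≤ n → n ∉ S → α ∣ (s - n) := by
          intro n hn hnS
          by_contra hdv
          have hed := Int.emod_add_mul_ediv (s - n) α
          set i := (s - n) % α with hidef
          set q := (s - n) / α with hqdef
          have hi0 : 0 ≤ i := Int.emod_nonneg _ (by omega)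
          have hi2 : i < α := Int.emod_lt_of_pos _ (by omega)
          have hi1 : 1 ≤ i := by
            rcases eq_or_lt_of_le hi0 with h' | h'
            · exact absurd ⟨q, by linarith⟩ hdv
            · omega
          have hq0 : q ≤ 0 := by
            by_contra hq
            push_neg at hq
            have h1q : 1 ≤ q := hq
            have hle : α * 1 ≤ α * q := by
              apply mul_le_mul_of_nonneg_left h1q (by omega)
            linarith
          have hsi : s - i ∈ S := hgap _ (by omega) (by omega)
          have hmq : α * (-q) ∈ S := hdvd _ (mul_nonneg (by omega) (by omega)) ⟨-q, rfl⟩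
          apply hnS
          have h2 : n = (s - i) + α * (-q) := by linear_combination hed
          rw [h2]; exact hadd _ hsi _ hmq
        have hγmod : α ∣ (s - γ) := hi γ (by omega) hγS
        have hγsS : γ - s ∈ S := by
          obtain ⟨k, hk⟩ := hγmod
          exact hdvd _ (by omega) ⟨-k, by linear_combination -hk⟩
        have hsS : s ∉ S := fun h => hγS (by
          have h2 : γ = s + (γ - s) := by ring
          rw [h2]; exact hadd _ h _ hγsS)
        have hsdvd : ¬ α ∣ s := fun h => hsS (hdvd s (by omega) h)
        have hnotboth : c₀ ≤ s - α ∨ γ - c₀ ≤ s - α := by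
          by_contra h
          push_neg at h
          have h1 := hi c₀ (by omega) hc₀S
          have h2 := hi (γ - c₀) (by omega) hc₀γ
          apply hsdvd
          obtain ⟨k1, hk1⟩ := h1
          obtain ⟨k2, hk2⟩ := h2
          obtain ⟨k3, hk3⟩ := hγmod
          exact ⟨k1 + k2 - k3, by linear_combination hk1 + hk2 - hk3⟩
        rcases hnotboth with hc | hc
        · refine ⟨c₀, s - c₀, hc₀0, by omega, hc₀S, ?_, by ring⟩
          intro h
          apply hc₀γ
          have h2 : γ - c₀ = (s - c₀) + (γ - s) := by ring
          rw [h2]; exact hadd _ h _ hγsS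
        · refine ⟨γ - c₀, s - (γ - c₀), by omega, by omega, hc₀γ, ?_, by ring⟩
          intro h
          apply hc₀S
          have h2 : c₀ = (s - (γ - c₀)) + (γ - s) := by ring
          rw [h2]; exact hadd _ h _ hγsS
      · push_neg at hgap
        obtain ⟨g, hg1, hg2, hg3⟩ := hgap
        exact ⟨g, s - g, by omega, by omega, hg3,
          hsmall _ (by omega) (by omega), by omega⟩
  intro a ha1 ha2
  obtain ⟨x, y, hx0, hy0, hxS, hyS, hxy⟩ := key (2 * γ - a) (by omega) (by omega)
  refine ⟨γ - x, ?_, γ - y, ?_, by omega⟩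
  · rw [hKc]
    simp only [Set.mem_setOf_eq]
    refine ⟨by omega, by omega, ?_⟩
    simpa using hxS
  · rw [hKc]
    simp only [Set.mem_setOf_eq]
    refine ⟨by omega, by omega, ?_⟩
    simpa using hyS
end

section
/- Let S ⊆ ℕ^s be a value semigroup with conductor β, Frobenius vector γ = β − (1,…,1), and α := min(S \ {0}) (which exists by the minimum-closure axiom). Let K := { a ∈ ℤ^s : Δ^S(γ − a) = ∅ } where Δ^S(a) := { b ∈ S : b_i = a_i for some i, b_j > a_j for j ≠ i }. Then for every v ∈ ℕ^s with 0 ≤ v ≤ α such that v ≠ α − e_i for every standard basis vector e_i, the element β − α + v belongs to K. -/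
/-- For a value semigroup `S ⊆ ℕ^s` with conductor `β` and minimal nonzero
element `α`, every `v` with `0 ≤ v ≤ α` and `v ≠ α - e_i` for all `i`
satisfies `β - α + v ∈ K`. -/
theorem stmt3 (s : ℕ) (hs : 0 < s) (S : Set (Fin s → ℤ))
    (hnneg : ∀ a ∈ S, 0 ≤ a)
    (h0 : (0 : Fin s → ℤ) ∈ S)
    (hadd : ∀ a ∈ S, ∀ b ∈ S, a + b ∈ S)
    (hmin : ∀ a ∈ S, ∀ b ∈ S, a ⊓ b ∈ S)
    (haxiom : ∀ a ∈ S, ∀ b ∈ S, ∀ i : Fin s, a i = b i →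
      ∃ ε ∈ S, a i < ε i ∧ ∀ j, j ≠ i →
        min (a j) (b j) ≤ ε j ∧ (a j ≠ b j → ε j = min (a j) (b j)))
    (β : Fin s → ℤ)
    (hβ : (∀ x, β ≤ x → x ∈ S) ∧ ∀ b, (∀ x, b ≤ x → x ∈ S) → β ≤ b)
    (α : Fin s → ℤ) (hα : α ∈ S ∧ α ≠ 0 ∧ ∀ x ∈ S, x ≠ 0 → α ≤ x)
    (Δ : (Fin s → ℤ) → Set (Fin s → ℤ))
    (hΔ : ∀ a, Δ a = {b ∈ S | ∃ i, b i = a i ∧ ∀ j, j ≠ i → a j < b j})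
    (K : Set (Fin s → ℤ)) (hK : K = {a | Δ (β - 1 - a) = ∅}) :
    ∀ v : Fin s → ℤ, 0 ≤ v → v ≤ α → (∀ i : Fin s, v ≠ α - Pi.single i 1) →
      β - α + v ∈ K := by
  intro v hv0 hvα hvne
  rw [hK]
  simp only [Set.mem_setOf_eq, hΔ]
  rw [Set.eq_empty_iff_forall_notMem]
  rintro b ⟨hbS, i, hbi, hbj⟩
  have hbi' : b i = α i - v i - 1 := by
    simp only [Pi.sub_apply, Pi.add_apply, Pi.one_apply] at hbi
    linarith
  have hv0i : (0:ℤ) ≤ v i := hv0 i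
  have hb0 : b = 0 := by
    by_contra hb
    have hle := hα.2.2 b hbS hb i
    linarith
  have hvi : v i = α i - 1 := by
    have : b i = 0 := by rw [hb0]; rfl
    linarith
  apply hvne i
  funext j
  by_cases hji : j = i
  · subst hji
    simp [Pi.single_apply, hvi]
  · have h1 := hbj j hji
    have hbj0 : b j = 0 := by rw [hb0]; rfl
    simp only [Pi.sub_apply, Pi.add_apply, Pi.one_apply, hbj0] at h1
    have h2 : v j ≤ α j := hvα j
    simp only [Pi.sub_apply, Pi.single_apply, if_neg hji, sub_zero]
    linarith
end

section
/- Let S ⊆ ℕ be a numerical semigroup with conductor β, let δ := |ℕ \ S| be its number of gaps, and list the gaps as l₁, …, l_δ. Then the set S* := {0} ∪ { 2β − l_i : 1 ≤ i ≤ δ } ∪ { n ∈ ℕ : n ≥ 2β + 1 } is a numerical semigroup. -/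
/-- The set `S* = {0} ∪ {2β - l : l ∉ S} ∪ {n : n ≥ 2β + 1}` is a numerical
semigroup, for `S` a numerical semigroup with conductor `β`. -/
theorem stmt4 (S : Set ℕ)
    (h0 : 0 ∈ S)
    (hadd : ∀ a ∈ S, ∀ b ∈ S, a + b ∈ S)
    (β : ℕ)
    (hβ : (∀ n, β ≤ n → n ∈ S) ∧ ∀ b, (∀ n, b ≤ n → n ∈ S) → β ≤ b)
    (Sstar : Set ℕ)
    (hSstar : Sstar = {0} ∪ {m | ∃ l, l ∉ S ∧ m = 2 * β - l} ∪ {n | 2 * β + 1 ≤ n}) :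
    0 ∈ Sstar ∧ (∀ a ∈ Sstar, ∀ b ∈ Sstar, a + b ∈ Sstar) ∧
      ∃ c, ∀ n, c ≤ n → n ∈ Sstar := by
  subst hSstar
  -- any element of the middle set is at least β + 1
  have hmid : ∀ m, (∃ l, l ∉ S ∧ m = 2 * β - l) → β + 1 ≤ m := by
    rintro m ⟨l, hl, rfl⟩
    have h1 : l < β := by
      by_contra h
      exact hl (hβ.1 l (by omega))
    omega
  refine ⟨Or.inl (Or.inl rfl), ?_, 2 * β + 1, fun n hn => Or.inr hn⟩
  rintro a (ha | ha) b hb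
  · rcases ha with ha | ha
    · simp only [Set.mem_singleton_iff] at ha
      subst ha; simpa using hb
    · have ha' := hmid a ha
      rcases hb with (hb | hb) | hb
      · simp only [Set.mem_singleton_iff] at hb
        subst hb; simpa using Or.inl (Or.inr ha)
      · have hb' := hmid b hb
        exact Or.inr (by simp only [Set.mem_setOf_eq]; omega)
      · exact Or.inr (by simp only [Set.mem_setOf_eq] at hb ⊢; omega)
  · simp only [Set.mem_setOf_eq] at ha
    refine Or.inr ?_
    simp only [Set.mem_setOf_eq]
    omega
end

section
/- Let S ⊆ ℕ be a numerical semigroup with conductor β and number of gaps δ, and let S* := {0} ∪ { 2β − l : l ∈ ℕ \ S } ∪ { n ∈ ℕ : n ≥ 2β + 1 }. Then the number of gaps of S* equals δ + 2(β − δ), i.e., |ℕ \ S*| = 2β − δ. -/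
/-- The number of gaps of `S* = {0} ∪ {2β - l : l ∉ S} ∪ {n ≥ 2β + 1}` is
`2β - δ`, where `δ` is the number of gaps of `S` and `β` its conductor. -/
theorem stmt5 (S : Set ℕ)
    (h0 : 0 ∈ S)
    (hadd : ∀ a ∈ S, ∀ b ∈ S, a + b ∈ S)
    (β : ℕ)
    (hβ : (∀ n, β ≤ n → n ∈ S) ∧ ∀ b, (∀ n, b ≤ n → n ∈ S) → β ≤ b)
    (δ : ℕ) (hδ : δ = Sᶜ.ncard)
    (Sstar : Set ℕ)
    (hSstar : Sstar = {0} ∪ {m | ∃ l, l ∉ S ∧ m = 2 * β - l} ∪ {n | 2 * β + 1 ≤ n}) :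
    Sstarᶜ.ncard = 2 * β - δ := by
  obtain ⟨hβ1, _⟩ := hβ
  have hgap : ∀ l, l ∉ S → 1 ≤ l ∧ l < β := by
    intro l hl
    constructor
    · rcases Nat.eq_zero_or_pos l with h | h
      · exact absurd (h ▸ h0) hl
      · exact h
    · by_contra h
      exact hl (hβ1 l (le_of_not_gt h))
  have hcomp : Sstarᶜ = Set.Icc 1 (2 * β) \ ((fun l => 2 * β - l) '' Sᶜ) := by
    ext n
    simp only [hSstar, Set.mem_compl_iff, Set.mem_union, Set.mem_singleton_iff,
      Set.mem_setOf_eq, Set.mem_diff, Set.mem_Icc, Set.mem_image, not_or, not_exists]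
    constructor
    · rintro ⟨⟨hn0, hnl⟩, hn2⟩
      refine ⟨⟨by omega, by omega⟩, ?_⟩
      intro l hlh
      exact hnl l ⟨hlh.1, hlh.2.symm⟩
    · rintro ⟨⟨h1, h2⟩, him⟩
      exact ⟨⟨by omega, fun l hl => him l ⟨hl.1, hl.2.symm⟩⟩, by omega⟩
  have hsub : ((fun l => 2 * β - l) '' Sᶜ) ⊆ Set.Icc 1 (2 * β) := by
    rintro n ⟨l, hl, rfl⟩
    have := hgap l hl
    simp only [Set.mem_Icc]
    omega
  have hinj : Set.InjOn (fun l => 2 * β - l) Sᶜ := by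
    intro a ha b hb hab
    have h1 := hgap a ha
    have h2 := hgap b hb
    simp only at hab
    omega
  rw [hcomp, Set.ncard_diff hsub ((Set.finite_Icc 1 (2*β)).subset hsub), Set.ncard_image_of_injOn hinj, ← hδ]
  rw [← Finset.coe_Icc, Set.ncard_coe_finset, Nat.card_Icc]
  omega
end

section
/- Let S ⊆ ℕ be a numerical semigroup with conductor β, α := min(S\{0}), and suppose 2α ≤ β. Let d₁, d₂ be natural numbers with d₁ + d₂ = β − 1, d₁ ≤ d₂, and let m be the largest integer with (m+1)α ≤ β. Let q₂ be the largest integer with q₂α ≤ d₁ and set q₁ := m − q₂. Then q₁ ≥ 0, q₂α + d₂ < β, and q₁α + d₁ < β. -/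
/-- Decomposition step in the proof of Theorem 1: with `d₁ + d₂ = β - 1`,
`d₁ ≤ d₂`, `2α ≤ β`, `m` maximal with `(m+1)α ≤ β` and `q₂` maximal with
`q₂α ≤ d₁`, setting `q₁ := m - q₂` one has `q₁ ≥ 0`, `q₂α + d₂ < β` and
`q₁α + d₁ < β`. -/
theorem stmt17 (S : Set ℕ)
    (h0 : 0 ∈ S)
    (hadd : ∀ a ∈ S, ∀ b ∈ S, a + b ∈ S)
    (β : ℕ)
    (hβ : (∀ n, β ≤ n → n ∈ S) ∧ ∀ b, (∀ n, b ≤ n → n ∈ S) → β ≤ b)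
    (α : ℕ) (hα : α ∈ S ∧ α ≠ 0 ∧ ∀ x ∈ S, x ≠ 0 → α ≤ x)
    (h2α : 2 * α ≤ β)
    (d₁ d₂ : ℕ) (hd : d₁ + d₂ + 1 = β) (hd12 : d₁ ≤ d₂)
    (m : ℤ) (hm : (m + 1) * α ≤ (β : ℤ) ∧ ∀ m' : ℤ, (m' + 1) * α ≤ (β : ℤ) → m' ≤ m)
    (q₂ : ℤ) (hq₂ : q₂ * α ≤ (d₁ : ℤ) ∧ ∀ q : ℤ, q * α ≤ (d₁ : ℤ) → q ≤ q₂)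
    (q₁ : ℤ) (hq₁ : q₁ = m - q₂) :
    0 ≤ q₁ ∧ q₂ * α + d₂ < (β : ℤ) ∧ q₁ * α + d₁ < (β : ℤ) := by
  obtain ⟨hq₂le, hq₂max⟩ := hq₂
  obtain ⟨hmle, hmmax⟩ := hm
  have hαZ : (2 : ℤ) * α ≤ β := by exact_mod_cast h2α
  have hdZ : (d₁ : ℤ) + d₂ + 1 = β := by exact_mod_cast hd
  have hd12Z : (d₁ : ℤ) ≤ d₂ := by exact_mod_cast hd12
  have hgt : (d₁ : ℤ) < (q₂ + 1) * α := by
    by_contra h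
    push_neg at h
    have := hq₂max (q₂ + 1) h
    linarith
  -- d₁ + α < β
  have hkey : (d₁ : ℤ) + α < β := by linarith
  -- (q₂+1)*α ≤ β, hence q₂ ≤ m
  have hq₂m : q₂ ≤ m := hmmax q₂ (by nlinarith)
  refine ⟨by omega, by linarith, ?_⟩
  have hrw : q₁ * α = (m + 1) * α - (q₂ + 1) * α := by rw [hq₁]; ring
  linarith
end
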